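/- arXiv:math/0610852 — 2 statements merged into one kernel-verified Lean document; each statement's English description precedes it below -/
import Mathlib

section
/- For a continuous cdf F of a positive random variable Y with finite positive mean μ, the Lorenz curve satisfies L(u) = μ⁻¹ E[Y · 1{Y ≤ F⁻¹(u)}] for all u ∈ (0,1). -/
open MeasureTheory Set

noncomputable def quant (F : ℝ → ℝ) (u : ℝ) : ℝ := sInf {y | u ≤ F y}

theorem lorenz_truncated_mean {Ω : Type*} [MeasurableSpace Ω]
    (ℙ : Measure Ω) [IsProbabilityMeasure ℙ] (Y : Ω → ℝ) (hY : Measurable Y)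
    (hYpos : ∀ ω, 0 < Y ω) (hYint : Integrable Y ℙ)
    (F : ℝ → ℝ) (hFc : Continuous F) (hFmono : StrictMonoOn F (Set.Ioi 0))
    (hcdf : ∀ y, (ℙ {ω | Y ω ≤ y}).toReal = F y)
    (μ : ℝ) (hμdef : μ = ∫ ω, Y ω ∂ℙ) (hμpos : 0 < μ) :
    ∀ u ∈ Set.Ioo (0:ℝ) 1,
      μ⁻¹ * (∫ s in (0:ℝ)..u, quant F s)
        = μ⁻¹ * ∫ ω in {ω | Y ω ≤ quant F u}, Y ω ∂ℙ := by
  -- basic facts about F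
  have hF0 : ∀ y ≤ (0:ℝ), F y = 0 := by
    intro y hy
    rw [← hcdf y]
    have hempty : {ω | Y ω ≤ y} = ∅ := by
      ext ω
      simp only [mem_setOf_eq, mem_empty_iff_false, iff_false, not_le]
      exact lt_of_le_of_lt hy (hYpos ω)
    rw [hempty]
    simp
  have hFmono' : Monotone F := by
    intro a b hab
    rw [← hcdf a, ← hcdf b]
    exact ENNReal.toReal_mono (measure_ne_top _ _)
      (measure_mono fun ω h => le_trans h hab)
  have hFle1 : ∀ y, F y ≤ 1 := by
    intro y
    rw [← hcdf y]
    have := ENNReal.toReal_mono ENNReal.one_ne_top (prob_le_one (μ := ℙ) (s := {ω | Y ω ≤ y}))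
    simpa using this
  -- the pushforward measure
  set ν := Measure.map Y ℙ with hν
  have hνIic : ∀ y, ν (Iic y) = ℙ {ω | Y ω ≤ y} := fun y => by
    rw [Measure.map_apply hY measurableSet_Iic]; rfl
  haveI : IsProbabilityMeasure ν := Measure.isProbabilityMeasure_map hY.aemeasurable
  have hFtend : Filter.Tendsto F Filter.atTop (nhds 1) := by
    have h1 := tendsto_measure_Iic_atTop ν
    rw [measure_univ] at h1
    have h2 : Filter.Tendsto (fun y => (ν (Iic y)).toReal) Filter.atTop
        (nhds (1:ENNReal).toReal) := (ENNReal.tendsto_toReal ENNReal.one_ne_top).comp h1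
    have heq : (fun y => (ν (Iic y)).toReal) = F := by
      funext y; rw [hνIic, hcdf]
    rw [heq] at h2
    simpa using h2
  have hSne : ∀ s : ℝ, s < 1 → {y | s ≤ F y}.Nonempty := by
    intro s hs
    obtain ⟨y, hy⟩ := (hFtend.eventually (eventually_ge_nhds hs)).exists
    exact ⟨y, hy⟩
  have hSbdd : ∀ s : ℝ, 0 < s → BddBelow {y | s ≤ F y} := by
    intro s hs
    refine ⟨0, fun y hy => ?_⟩
    by_contra h
    push_neg at h
    have hy' : s ≤ F y := hy
    rw [hF0 y h.le] at hy'
    exact absurd hy' (not_le.2 hs)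
  have hq_mem : ∀ s ∈ Ioo (0:ℝ) 1, s ≤ F (quant F s) := by
    intro s hs
    have hcl : IsClosed {y | s ≤ F y} := isClosed_le continuous_const hFc
    exact hcl.csInf_mem (hSne s hs.2) (hSbdd s hs.1)
  have hq_nonneg : ∀ s ∈ Ioo (0:ℝ) 1, (0:ℝ) ≤ quant F s := by
    intro s hs
    refine le_csInf (hSne s hs.2) (fun y hy => ?_)
    by_contra h
    push_neg at h
    have hy' : s ≤ F y := hy
    rw [hF0 y h.le] at hy'
    exact absurd hy' (not_le.2 hs.1)
  have hFq : ∀ s ∈ Ioo (0:ℝ) 1, F (quant F s) = s := by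
    intro s hs
    refine le_antisymm ?_ (hq_mem s hs)
    by_contra h
    push_neg at h
    have hs0 : s ∈ Icc (F 0) (F (quant F s)) := ⟨(hF0 0 le_rfl).le.trans hs.1.le, h.le⟩
    obtain ⟨y, hy, hFy⟩ := intermediate_value_Icc (hq_nonneg s hs) hFc.continuousOn hs0
    have h1 : quant F s ≤ y := csInf_le (hSbdd s hs.1) hFy.ge
    have he : y = quant F s := le_antisymm hy.2 h1
    rw [he] at hFy
    exact absurd hFy.symm h.ne
  have hq_pos : ∀ s ∈ Ioo (0:ℝ) 1, 0 < quant F s := by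
    intro s hs
    by_contra h
    push_neg at h
    have h1 := hFq s hs
    rw [hF0 _ h] at h1
    exact hs.1.ne h1
  have hiff : ∀ s ∈ Ioo (0:ℝ) 1, ∀ y : ℝ, (quant F s ≤ y ↔ s ≤ F y) := by
    intro s hs y
    constructor
    · intro h
      calc s = F (quant F s) := (hFq s hs).symm
        _ ≤ F y := hFmono' h
    · intro h
      exact csInf_le (hSbdd s hs.1) h
  have hqmono : MonotoneOn (quant F) (Ioo (0:ℝ) 1) := by
    intro a ha b hb hab
    exact (hiff a ha _).2 (hab.trans (hq_mem b hb))
  have hIoo : MeasurableSet (Ioo (0:ℝ) 1) := measurableSet_Ioo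
  set lam := volume.restrict (Ioo (0:ℝ) 1) with hlam
  have hqae : AEMeasurable (quant F) lam :=
    aemeasurable_restrict_of_monotoneOn hIoo hqmono
  haveI : IsProbabilityMeasure lam := by
    constructor
    rw [hlam, Measure.restrict_apply MeasurableSet.univ, univ_inter, Real.volume_Ioo]
    norm_num
  haveI : IsProbabilityMeasure (Measure.map (quant F) lam) :=
    Measure.isProbabilityMeasure_map hqae
  -- the pushforward of Lebesgue under the quantile is the law of Y
  have hmap : Measure.map (quant F) lam = ν := by
    refine Measure.ext_of_Iic _ _ (fun y => ?_)
    rw [Measure.map_apply_of_aemeasurable hqae measurableSet_Iic, hνIic y, hlam,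
      Measure.restrict_apply' hIoo]
    rcases le_or_gt y 0 with hy | hy
    · have h1 : quant F ⁻¹' Iic y ∩ Ioo 0 1 = ∅ := by
        ext s
        simp only [mem_inter_iff, mem_preimage, mem_Iic, mem_Ioo, mem_empty_iff_false, iff_false,
          not_and]
        intro h1 h2 h3
        exact absurd (h1.trans hy) (not_le.2 (hq_pos s ⟨h2, h3⟩))
      have h2 : {ω | Y ω ≤ y} = ∅ := by
        ext ω
        simp only [mem_setOf_eq, mem_empty_iff_false, iff_false, not_le]
        exact lt_of_le_of_lt hy (hYpos ω)
      rw [h1, h2]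
      simp
    · have hPy : ℙ {ω | Y ω ≤ y} = ENNReal.ofReal (F y) := by
        rw [← hcdf y, ENNReal.ofReal_toReal (measure_ne_top _ _)]
      have h1 : quant F ⁻¹' Iic y ∩ Ioo 0 1 = Ioo 0 1 ∩ Iic (F y) := by
        ext s
        simp only [mem_inter_iff, mem_preimage, mem_Iic, mem_Ioo]
        constructor
        · rintro ⟨h, hs1, hs2⟩
          exact ⟨⟨hs1, hs2⟩, (hiff s ⟨hs1, hs2⟩ y).1 h⟩
        · rintro ⟨⟨hs1, hs2⟩, h⟩
          exact ⟨(hiff s ⟨hs1, hs2⟩ y).2 h, hs1, hs2⟩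
      rw [h1, hPy]
      rcases lt_or_eq_of_le (hFle1 y) with h | h
      · have h2 : Ioo (0:ℝ) 1 ∩ Iic (F y) = Ioc 0 (F y) := by
          ext s
          simp only [mem_inter_iff, mem_Ioo, mem_Iic, mem_Ioc]
          exact ⟨fun ⟨⟨a, _⟩, c⟩ => ⟨a, c⟩, fun ⟨a, c⟩ => ⟨⟨a, lt_of_le_of_lt c h⟩, c⟩⟩
        rw [h2, Real.volume_Ioc, sub_zero]
      · have h2 : Ioo (0:ℝ) 1 ∩ Iic (F y) = Ioo 0 1 :=
          inter_eq_left.2 (fun s hs => h ▸ hs.2.le)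
        rw [h2, Real.volume_Ioo, sub_zero, h]
  -- main computation
  intro u hu
  congr 1
  set t := quant F u with ht
  have hFt : F t = u := hFq u hu
  have hset : MeasurableSet {ω | Y ω ≤ t} := hY measurableSet_Iic
  have hind : StronglyMeasurable ((Iic t).indicator (id : ℝ → ℝ)) :=
    (measurable_id.indicator measurableSet_Iic).stronglyMeasurable
  have step1 : ∫ ω in {ω | Y ω ≤ t}, Y ω ∂ℙ = ∫ ω, (Iic t).indicator id (Y ω) ∂ℙ := by
    rw [← integral_indicator hset]
    refine integral_congr_ae (Filter.Eventually.of_forall fun ω => ?_)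
    by_cases h : Y ω ≤ t
    · simp [indicator, h]
    · simp [indicator, h]
  have step2 : ∫ ω, (Iic t).indicator id (Y ω) ∂ℙ = ∫ y, (Iic t).indicator id y ∂ν :=
    (integral_map hY.aemeasurable hind.aestronglyMeasurable).symm
  have step3 : ∫ y, (Iic t).indicator id y ∂ν = ∫ s, (Iic t).indicator id (quant F s) ∂lam := by
    rw [← hmap]
    exact integral_map hqae hind.aestronglyMeasurable
  have step4 : ∫ s, (Iic t).indicator id (quant F s) ∂lam
      = ∫ s in Ioo (0:ℝ) 1, (Iic u).indicator (quant F) s := by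
    rw [hlam]
    refine setIntegral_congr_fun hIoo (fun s hs => ?_)
    by_cases h : s ≤ u
    · have hq : quant F s ≤ t := (hiff s hs t).2 (h.trans hFt.ge)
      simp [indicator, h, hq]
    · have hq : ¬ quant F s ≤ t := fun hc => h ((hiff s hs t).1 hc |>.trans hFt.le)
      simp [indicator, h, hq]
  have step5 : ∫ s in Ioo (0:ℝ) 1, (Iic u).indicator (quant F) s
      = ∫ s in Ioc (0:ℝ) u, quant F s := by
    rw [integral_indicator measurableSet_Iic, Measure.restrict_restrict measurableSet_Iic]
    congr 1
    have : Iic u ∩ Ioo (0:ℝ) 1 = Ioc 0 u := by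
      ext s
      simp only [mem_inter_iff, mem_Iic, mem_Ioo, mem_Ioc]
      exact ⟨fun ⟨a, b, _⟩ => ⟨b, a⟩, fun ⟨a, b⟩ => ⟨b, a, lt_of_le_of_lt b hu.2⟩⟩
    rw [this]
  rw [intervalIntegral.integral_of_le hu.1.le, step1, step2, step3, step4, step5]
end

section
/- Let F and H be continuous, strictly increasing distribution functions on (0,∞) with F(0) = H(0) = 0, and suppose X has distribution F and Z has distribution H. Then H⁻¹∘F is starshaped on {x : 0 < F(x) < 1} if and only if there exists a positive nondecreasing function q on {x : 0 < F(x) < 1} such that Z has the same distribution as q(X)·X. -/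
open MeasureTheory Set
open scoped ENNReal

/-- Basic properties of the generalized inverse `quant` for a continuous monotone
function vanishing on nonpositives, at a level `u` that is positive and attained. -/
lemma quant_basic {H : ℝ → ℝ} (hc : Continuous H) (hm : Monotone H)
    (h0 : ∀ t, t ≤ 0 → H t = 0) {u : ℝ} (hu : 0 < u) (hne : ∃ b, u ≤ H b) :
    (∀ y, quant H u ≤ y ↔ u ≤ H y) ∧ 0 < quant H u := by
  have hbdd : BddBelow {t | u ≤ H t} := by
    refine ⟨0, fun t ht => ?_⟩
    by_contra h
    push_neg at h
    have h1 := h0 t h.le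
    simp only [mem_setOf_eq] at ht
    linarith
  have hclosed : IsClosed {t | u ≤ H t} := isClosed_le continuous_const hc
  have hmem : sInf {t | u ≤ H t} ∈ {t | u ≤ H t} := hclosed.csInf_mem hne hbdd
  simp only [mem_setOf_eq] at hmem
  have hpos : 0 < quant H u := by
    by_contra h
    push_neg at h
    have h1 := h0 _ h
    rw [show sInf {t | u ≤ H t} = quant H u from rfl, h1] at hmem
    linarith
  refine ⟨fun y => ⟨fun h => le_trans hmem (hm h), fun h => csInf_le hbdd h⟩, hpos⟩

theorem starshaped_iff_multiplier {Ω : Type*} [MeasurableSpace Ω]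
    (ℙ : Measure Ω) [IsProbabilityMeasure ℙ]
    (X Z : Ω → ℝ) (hX : Measurable X) (hZ : Measurable Z)
    (hXpos : ∀ ω, 0 < X ω) (hZpos : ∀ ω, 0 < Z ω)
    (F H : ℝ → ℝ) (hFc : Continuous F) (hHc : Continuous H)
    (hFmono : StrictMonoOn F (Set.Ioi 0)) (hHmono : StrictMonoOn H (Set.Ioi 0))
    (hF0 : F 0 = 0) (hH0 : H 0 = 0)
    (hXF : ∀ x, (ℙ {ω | X ω ≤ x}).toReal = F x)
    (hZH : ∀ x, (ℙ {ω | Z ω ≤ x}).toReal = H x) :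
    (∀ x ∈ {x : ℝ | 0 < F x ∧ F x < 1}, ∀ l ∈ Set.Icc (0:ℝ) 1,
        l * x ∈ {x : ℝ | 0 < F x ∧ F x < 1} →
        quant H (F (l * x)) ≤ l * quant H (F x))
    ↔ ∃ q : ℝ → ℝ, (∀ x ∈ {x : ℝ | 0 < F x ∧ F x < 1}, 0 < q x) ∧
        MonotoneOn q {x : ℝ | 0 < F x ∧ F x < 1} ∧
        ∀ y : ℝ, ℙ {ω | q (X ω) * X ω ≤ y} = ℙ {ω | Z ω ≤ y} := by
  -- Generic basic facts for a cdf of a positive random variable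
  have basic : ∀ (W : Ω → ℝ) (G : ℝ → ℝ), (∀ ω, 0 < W ω) →
      (∀ x, (ℙ {ω | W ω ≤ x}).toReal = G x) →
      Monotone G ∧ (∀ x, 0 ≤ G x) ∧ (∀ x, G x ≤ 1) ∧ (∀ x, x ≤ 0 → G x = 0) ∧
      (∀ x, ℙ {ω | W ω ≤ x} = ENNReal.ofReal (G x)) ∧
      (∀ u : ℝ, u < 1 → ∃ b, u ≤ G b) := by
    intro W G hWpos hWG
    have hmono : Monotone G := by
      intro a b hab
      rw [← hWG a, ← hWG b]
      exact ENNReal.toReal_mono (measure_ne_top _ _)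
        (measure_mono (fun ω h => le_trans h hab))
    have hnn : ∀ x, 0 ≤ G x := fun x => (hWG x) ▸ ENNReal.toReal_nonneg
    have hle1 : ∀ x, G x ≤ 1 := by
      intro x
      rw [← hWG x]
      have h1 : ℙ {ω | W ω ≤ x} ≤ 1 := prob_le_one
      calc (ℙ {ω | W ω ≤ x}).toReal ≤ (1 : ℝ≥0∞).toReal :=
            ENNReal.toReal_mono ENNReal.one_ne_top h1
        _ = 1 := by simp
    have hzero : ∀ x, x ≤ 0 → G x = 0 := by
      intro x hx
      rw [← hWG x]
      have : {ω | W ω ≤ x} = ∅ := by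
        apply eq_empty_of_forall_notMem
        intro ω hω
        simp only [mem_setOf_eq] at hω
        linarith [hWpos ω]
      rw [this, measure_empty]
      simp
    have hofReal : ∀ x, ℙ {ω | W ω ≤ x} = ENNReal.ofReal (G x) := by
      intro x
      rw [← hWG x, ENNReal.ofReal_toReal (measure_ne_top _ _)]
    refine ⟨hmono, hnn, hle1, hzero, hofReal, ?_⟩
    intro u hu
    by_contra h
    push_neg at h
    have hunion : (⋃ n : ℕ, {ω | W ω ≤ (n : ℝ)}) = univ := by
      ext ω
      simp only [mem_iUnion, mem_setOf_eq, mem_univ, iff_true]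
      exact ⟨⌈W ω⌉₊, Nat.le_ceil _⟩
    have hdir : Directed (· ⊆ ·) (fun n : ℕ => {ω | W ω ≤ (n : ℝ)}) := by
      intro m n
      refine ⟨max m n, fun ω hω => ?_, fun ω hω => ?_⟩ <;>
        simp only [mem_setOf_eq] at hω ⊢
      · exact le_trans hω (by exact_mod_cast le_max_left m n)
      · exact le_trans hω (by exact_mod_cast le_max_right m n)
    have h1 : (1 : ℝ≥0∞) = ⨆ n : ℕ, ℙ {ω | W ω ≤ (n : ℝ)} := by
      rw [← hdir.measure_iUnion, hunion, measure_univ]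
    have h2 : (1 : ℝ≥0∞) ≤ ENNReal.ofReal u := by
      rw [h1]
      refine iSup_le fun n => ?_
      rw [hofReal]
      exact ENNReal.ofReal_le_ofReal (h n).le
    have h3 : ENNReal.ofReal u < 1 := ENNReal.ofReal_lt_one.mpr hu
    exact absurd (lt_of_le_of_lt h2 h3) (lt_irrefl _)
  obtain ⟨hFm, hFnn, hFle1, hFz, hmeasX, hsupF⟩ := basic X F hXpos hXF
  obtain ⟨hHm, hHnn, hHle1, hHz, hmeasZ, hsupH⟩ := basic Z H hZpos hZH
  have hFpos : ∀ x : ℝ, 0 < x → 0 < F x := by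
    intro x hx
    have h1 : F (x / 2) < F x :=
      hFmono (mem_Ioi.mpr (half_pos hx)) (mem_Ioi.mpr hx) (half_lt_self hx)
    linarith [hFnn (x / 2)]
  have hSpos : ∀ z : ℝ, 0 < F z → 0 < z := by
    intro z hz
    by_contra h
    push_neg at h
    rw [hFz z h] at hz
    exact lt_irrefl _ hz
  -- the set where F ∘ X = 1 is null
  have hAnull : ℙ {ω | 1 ≤ F (X ω)} = 0 := by
    by_cases hex : ∃ z : ℝ, 1 ≤ F z
    · have hbdd : BddBelow {z : ℝ | 1 ≤ F z} := by
        refine ⟨0, fun z hz => ?_⟩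
        by_contra h
        push_neg at h
        have := hFz z h.le
        simp only [mem_setOf_eq] at hz
        linarith
      have hcl : IsClosed {z : ℝ | 1 ≤ F z} := isClosed_le continuous_const hFc
      set c := sInf {z : ℝ | 1 ≤ F z} with hc
      have hcmem : c ∈ {z : ℝ | 1 ≤ F z} := hcl.csInf_mem hex hbdd
      simp only [mem_setOf_eq] at hcmem
      have hFc1 : F c = 1 := le_antisymm (hFle1 c) hcmem
      have hbound : ∀ ε : ℝ, 0 < ε → (ℙ {ω | 1 ≤ F (X ω)}).toReal ≤ 1 - F (c - ε) := by
        intro ε hε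
        have hsub : {ω | 1 ≤ F (X ω)} ⊆ {ω | X ω ≤ c - ε}ᶜ := by
          intro ω hω
          simp only [mem_compl_iff, mem_setOf_eq] at *
          intro hle
          have h1 : c ≤ X ω := csInf_le hbdd hω
          linarith
        have hms : MeasurableSet {ω | X ω ≤ c - ε} := hX measurableSet_Iic
        have h2 : ℙ ({ω | X ω ≤ c - ε}ᶜ) = 1 - ENNReal.ofReal (F (c - ε)) := by
          rw [measure_compl hms (measure_ne_top _ _), measure_univ, hmeasX]
        calc (ℙ {ω | 1 ≤ F (X ω)}).toReal
            ≤ (ℙ ({ω | X ω ≤ c - ε}ᶜ)).toReal :=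
              ENNReal.toReal_mono (measure_ne_top _ _) (measure_mono hsub)
          _ = 1 - F (c - ε) := by
              rw [h2, ENNReal.toReal_sub_of_le (ENNReal.ofReal_le_one.mpr (hFle1 _))
                ENNReal.one_ne_top, ENNReal.toReal_one, ENNReal.toReal_ofReal (hFnn _)]
      have htend : Filter.Tendsto (fun n : ℕ => 1 - F (c - 1 / (n + 1 : ℝ)))
          Filter.atTop (nhds (1 - F c)) := by
        have h1 : Filter.Tendsto (fun n : ℕ => c - 1 / (n + 1 : ℝ))
            Filter.atTop (nhds c) := by
          have := tendsto_one_div_add_atTop_nhds_zero_nat (𝕜 := ℝ)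
          simpa using tendsto_const_nhds.sub this
        exact tendsto_const_nhds.sub ((hFc.tendsto c).comp h1)
      have h3 : (ℙ {ω | 1 ≤ F (X ω)}).toReal ≤ 1 - F c :=
        ge_of_tendsto' htend fun n => hbound (1 / ((n : ℝ) + 1)) (by positivity)
      rw [hFc1] at h3
      simp only [sub_self] at h3
      have h4 : (ℙ {ω | 1 ≤ F (X ω)}).toReal = 0 := le_antisymm h3 ENNReal.toReal_nonneg
      exact (ENNReal.toReal_eq_zero_iff _).mp h4 |>.resolve_right (measure_ne_top _ _)
    · have : {ω | 1 ≤ F (X ω)} = ∅ := by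
        apply eq_empty_of_forall_notMem
        intro ω hω
        exact hex ⟨X ω, hω⟩
      rw [this, measure_empty]
  constructor
  · -- forward direction: starshaped ⇒ multiplier
    intro hs
    refine ⟨fun z => quant H (F z) / z, ?_, ?_, ?_⟩
    · intro z hz
      simp only [mem_setOf_eq] at hz
      have hz0 : 0 < z := hSpos z hz.1
      have hq := (quant_basic hHc hHm hHz hz.1 (hsupH _ hz.2)).2
      exact div_pos hq hz0
    · intro a ha b hb hab
      simp only [mem_setOf_eq] at ha hb
      have ha0 : 0 < a := hSpos a ha.1
      have hb0 : 0 < b := hSpos b hb.1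
      have key := hs b hb (a / b)
        ⟨div_nonneg ha0.le hb0.le, (div_le_one hb0).mpr hab⟩
        (by rw [div_mul_cancel₀ _ hb0.ne']; exact ha)
      rw [div_mul_cancel₀ _ hb0.ne'] at key
      -- key : quant H (F a) ≤ (a / b) * quant H (F b)
      show quant H (F a) / a ≤ quant H (F b) / b
      rw [div_le_div_iff₀ ha0 hb0]
      have h1 : quant H (F a) * b ≤ ((a / b) * quant H (F b)) * b :=
        mul_le_mul_of_nonneg_right key hb0.le
      calc quant H (F a) * b ≤ ((a / b) * quant H (F b)) * b := h1
        _ = quant H (F b) * a := by field_simp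
    · intro y
      have hev : ∀ ω, quant H (F (X ω)) / X ω * X ω = quant H (F (X ω)) :=
        fun ω => div_mul_cancel₀ _ (hXpos ω).ne'
      have hseteq : {ω | quant H (F (X ω)) / X ω * X ω ≤ y} \ {ω | 1 ≤ F (X ω)}
          = {ω | F (X ω) ≤ H y} \ {ω | 1 ≤ F (X ω)} := by
        ext ω
        simp only [mem_diff, mem_setOf_eq]
        constructor <;> rintro ⟨h1, h2⟩ <;> refine ⟨?_, h2⟩ <;> push_neg at h2
        · rw [hev ω] at h1
          exact ((quant_basic hHc hHm hHz (hFpos _ (hXpos ω)) (hsupH _ h2)).1 y).mp h1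
        · rw [hev ω]
          exact ((quant_basic hHc hHm hHz (hFpos _ (hXpos ω)) (hsupH _ h2)).1 y).mpr h1
      have h1 : ℙ {ω | quant H (F (X ω)) / X ω * X ω ≤ y} = ℙ {ω | F (X ω) ≤ H y} := by
        rw [← measure_diff_null hAnull, hseteq, measure_diff_null hAnull]
      rw [h1]
      rcases lt_or_ge (H y) 1 with hy1 | hy1
      · rcases le_or_gt (H y) 0 with hy0 | hy0
        · have hHy : H y = 0 := le_antisymm hy0 (hHnn y)
          have he : {ω | F (X ω) ≤ H y} = ∅ := by
            apply eq_empty_of_forall_notMem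
            intro ω hω
            simp only [mem_setOf_eq] at hω
            linarith [hFpos _ (hXpos ω)]
          rw [he, measure_empty, hmeasZ, hHy, ENNReal.ofReal_zero]
        · obtain ⟨b, hb⟩ := hsupF (H y) hy1
          have hb0 : (0 : ℝ) ≤ b := by
            by_contra h
            push_neg at h
            rw [hFz b h.le] at hb
            linarith
          obtain ⟨c, hcmem, hFcy⟩ := intermediate_value_Icc hb0 hFc.continuousOn
            (⟨by rw [hF0]; exact hy0.le, hb⟩ : H y ∈ Icc (F 0) (F b))
          have hc0 : 0 < c := hSpos c (hFcy ▸ hy0)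
          have he : {ω | F (X ω) ≤ H y} = {ω | X ω ≤ c} := by
            ext ω
            simp only [mem_setOf_eq]
            constructor
            · intro h
              by_contra hgt
              push_neg at hgt
              have := hFmono (mem_Ioi.mpr hc0) (mem_Ioi.mpr (hXpos ω)) hgt
              rw [hFcy] at this
              linarith
            · intro h
              rw [← hFcy]
              exact hFm h
          rw [he, hmeasX, hFcy, hmeasZ]
      · have he : {ω | F (X ω) ≤ H y} = univ :=
          eq_univ_of_forall fun ω => le_trans (hFle1 _) hy1
        have hHy : H y = 1 := le_antisymm (hHle1 y) hy1
        rw [he, measure_univ, hmeasZ, hHy, ENNReal.ofReal_one]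
  · -- backward direction: multiplier ⇒ starshaped
    rintro ⟨q, hqpos, hqmono, hq⟩
    intro x hx l hl hlx
    simp only [mem_setOf_eq] at hx hlx
    have hx0 : 0 < x := hSpos x hx.1
    have hlx0 : 0 < l * x := hSpos _ hlx.1
    have hTmono : ∀ a, (0 < F a ∧ F a < 1) → ∀ b, (0 < F b ∧ F b < 1) → a ≤ b →
        q a * a ≤ q b * b := by
      intro a ha b hb hab
      have ha0 : 0 < a := hSpos a ha.1
      exact mul_le_mul (hqmono ha hb hab) hab ha0.le (hqpos b hb).le
    have hTpos : ∀ z, (0 < F z ∧ F z < 1) → 0 < q z * z :=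
      fun z hz => mul_pos (hqpos z hz) (hSpos z hz.1)
    have hB1 : ∀ z, (0 < F z ∧ F z < 1) → F z ≤ H (q z * z) := by
      intro z hz
      have hsub : {ω | X ω ≤ z} ⊆ {ω | q (X ω) * X ω ≤ q z * z} := by
        intro ω hω
        simp only [mem_setOf_eq] at *
        exact hTmono (X ω) ⟨hFpos _ (hXpos ω), lt_of_le_of_lt (hFm hω) hz.2⟩ z hz hω
      have hm1 : ℙ {ω | X ω ≤ z} ≤ ℙ {ω | q (X ω) * X ω ≤ q z * z} :=
        measure_mono hsub
      rw [hq (q z * z)] at hm1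
      rw [← hXF z, ← hZH (q z * z)]
      exact ENNReal.toReal_mono (measure_ne_top _ _) hm1
    have hB2 : ∀ z, (0 < F z ∧ F z < 1) → q z * z ≤ quant H (F z) := by
      intro z hz
      have hz0 : 0 < z := hSpos z hz.1
      have hkey : ∀ ε : ℝ, 0 < ε → H (q z * z - ε) ≤ F z := by
        intro ε hε
        have hsub : {ω | q (X ω) * X ω ≤ q z * z - ε} \ {ω | 1 ≤ F (X ω)}
            ⊆ {ω | X ω ≤ z} := by
          rintro ω ⟨h1, h2⟩
          simp only [mem_setOf_eq] at h1 h2 ⊢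
          push_neg at h2
          by_contra hgt
          push_neg at hgt
          have hXS : 0 < F (X ω) ∧ F (X ω) < 1 := ⟨hFpos _ (hXpos ω), h2⟩
          have := hTmono z hz (X ω) hXS hgt.le
          linarith
        have hm1 : ℙ {ω | q (X ω) * X ω ≤ q z * z - ε} ≤ ℙ {ω | X ω ≤ z} := by
          calc ℙ {ω | q (X ω) * X ω ≤ q z * z - ε}
              = ℙ ({ω | q (X ω) * X ω ≤ q z * z - ε} \ {ω | 1 ≤ F (X ω)}) :=
                (measure_diff_null hAnull).symm
            _ ≤ ℙ {ω | X ω ≤ z} := measure_mono hsub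
        rw [hq] at hm1
        rw [← hZH, ← hXF]
        exact ENNReal.toReal_mono (measure_ne_top _ _) hm1
      have htend : Filter.Tendsto (fun n : ℕ => H (q z * z - 1 / (n + 1 : ℝ)))
          Filter.atTop (nhds (H (q z * z))) := by
        have h1 : Filter.Tendsto (fun n : ℕ => q z * z - 1 / (n + 1 : ℝ))
            Filter.atTop (nhds (q z * z)) := by
          have := tendsto_one_div_add_atTop_nhds_zero_nat (𝕜 := ℝ)
          simpa using tendsto_const_nhds.sub this
        exact (hHc.tendsto (q z * z)).comp h1
      have hHTz : H (q z * z) ≤ F z :=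
        le_of_tendsto' htend fun n => hkey (1 / ((n : ℝ) + 1)) (by positivity)
      have hne : Set.Nonempty {y : ℝ | F z ≤ H y} :=
        ⟨q z * z, by simp only [mem_setOf_eq]; exact hB1 z hz⟩
      refine le_csInf hne fun t ht => ?_
      simp only [mem_setOf_eq] at ht
      by_contra hlt
      push_neg at hlt
      have ht0 : 0 < t := by
        by_contra h
        push_neg at h
        rw [hHz t h] at ht
        linarith
      have := hHmono (mem_Ioi.mpr ht0) (mem_Ioi.mpr (hTpos z hz)) hlt
      linarith
    have hstep1 : quant H (F (l * x)) ≤ q (l * x) * (l * x) :=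
      ((quant_basic hHc hHm hHz hlx.1 (hsupH _ hlx.2)).1 _).mpr (hB1 _ hlx)
    have hlxle : l * x ≤ x := mul_le_of_le_one_left hx0.le hl.2
    calc quant H (F (l * x)) ≤ q (l * x) * (l * x) := hstep1
      _ ≤ q x * (l * x) :=
          mul_le_mul_of_nonneg_right (hqmono hlx hx hlxle) hlx0.le
      _ = l * (q x * x) := by ring
      _ ≤ l * quant H (F x) := mul_le_mul_of_nonneg_left (hB2 x hx) hl.1
end
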